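/- Let C, D be finitary extensive categories with finite products and let R : D → C preserve finite coproducts, have a finite-product-preserving left adjoint L, and be closed under subobjects (for every B in D and monomorphism m : X → R B in C, the unit X → R(L X) is an isomorphism). Then for every decidable object X of C, the unit X → R(L X) is an isomorphism. -/

import Mathlib

open CategoryTheory CategoryTheory.Limits

/-- A morphism `i : X ⟶ Z` is a (binary coproduct) summand if there is a morphism
`j : Y ⟶ Z` such that the cospan `X ⟶ Z ⟵ Y` is a coproduct cocone. -/
def IsSummand {C : Type*} [Category C] {X Z : C} (i : X ⟶ Z) : Prop :=
  ∃ (Y : C) (j : Y ⟶ Z), Nonempty (IsColimit (BinaryCofan.mk i j))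

/-- An object `X` is decidable if its diagonal `X ⟶ X ⨯ X` is a coproduct summand. -/
noncomputable def IsDecidableObj {C : Type*} [Category C] [HasBinaryProducts C] (X : C) : Prop :=
  IsSummand (diag X)
/-- Let `R : D ⥤ C` be a finite-coproduct preserving functor between finitary extensive
categories with finite products which has a finite-product preserving left adjoint `L` and
is closed under subobjects (the unit is an isomorphism at any subobject of an object of the
form `R B`).  Then the unit is an isomorphism at every decidable object of `C`. -/
theorem unit_isIso_of_decidable
    {C D : Type*} [Category C] [Category D] [FinitaryExtensive C] [FinitaryExtensive D]
    [HasFiniteProducts C] [HasFiniteProducts D]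
    (L : C ⥤ D) (R : D ⥤ C) (adj : L ⊣ R)
    [PreservesFiniteCoproducts R] [PreservesFiniteProducts L]
    (hsub : ∀ (B : D) (X : C) (m : X ⟶ R.obj B), Mono m → IsIso (adj.unit.app X)) :
    ∀ X : C, IsDecidableObj X → IsIso (adj.unit.app X) := by
  intro X hX
  obtain ⟨Y, j, ⟨hj⟩⟩ := hX
  have : PreservesColimits L := adj.leftAdjoint_preservesColimits
  have : PreservesLimits R := adj.rightAdjoint_preservesLimits
  -- the composite `L ⋙ R` preserves binary products and binary coproducts
  haveI : PreservesColimit (pair X Y) (L ⋙ R) := inferInstance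
  haveI : PreservesLimit (pair X X) (L ⋙ R) := inferInstance
  set η := adj.unit with hη
  -- the cofan `diag X, j` on `X ⨯ X` maps to a colimit cofan
  have hc : IsColimit ((L ⋙ R).mapCocone (BinaryCofan.mk (diag X) j)) :=
    isColimitOfPreserves (L ⋙ R) hj
  -- van Kampen: the unit naturality squares are pullbacks
  have hvk := FinitaryExtensive.vanKampen _ hc
  have key := (hvk (BinaryCofan.mk (diag X) j)
      (Functor.whiskerLeft (pair X Y) η) (η.app (X ⨯ X))
      (by ext ⟨⟨⟩⟩ <;> · dsimp; exact (η.naturality _).symm)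
      (NatTrans.equifibered_of_discrete _)).mp ⟨hj⟩ ⟨WalkingPair.left⟩
  -- `key : IsPullback (diag X) (η.app X) (η.app (X ⨯ X)) ((L ⋙ R).map (diag X))`
  have hmono : Mono (η.app X) := by
    constructor
    intro T a b w
    -- the two maps `prod.lift a b` and `a ≫ η ≫ RL(diag)` agree after `η`
    have hlim : IsLimit ((L ⋙ R).mapCone (limit.cone (pair X X))) :=
      isLimitOfPreserves (L ⋙ R) (limit.isLimit _)
    have hstar : prod.lift a b ≫ η.app (X ⨯ X) =
        (a ≫ η.app X) ≫ (L ⋙ R).map (diag X) := by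
      apply hlim.hom_ext
      rintro ⟨⟨⟩⟩
      · have n := η.naturality (prod.fst : X ⨯ X ⟶ X)
        simp only [Functor.id_map, Functor.comp_map] at n
        dsimp
        change (prod.lift a b ≫ η.app (X ⨯ X)) ≫ R.map (L.map (prod.fst : X ⨯ X ⟶ X)) =
          ((a ≫ η.app X) ≫ R.map (L.map (diag X))) ≫ R.map (L.map (prod.fst : X ⨯ X ⟶ X))
        rw [Category.assoc, ← n]
        simp only [prod.lift_fst_assoc, Category.assoc, ← Functor.map_comp, diag, prod.lift_fst,
          Functor.map_id, Category.comp_id]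
        refine (prod.lift_fst_assoc (a : T ⟶ X) (b : T ⟶ X) (η.app X)).trans ?_
        simp
      · have n := η.naturality (prod.snd : X ⨯ X ⟶ X)
        simp only [Functor.id_map, Functor.comp_map] at n
        dsimp
        change (prod.lift a b ≫ η.app (X ⨯ X)) ≫ R.map (L.map (prod.snd : X ⨯ X ⟶ X)) =
          ((a ≫ η.app X) ≫ R.map (L.map (diag X))) ≫ R.map (L.map (prod.snd : X ⨯ X ⟶ X))
        rw [Category.assoc, ← n]
        simp only [prod.lift_snd_assoc, Category.assoc, ← Functor.map_comp, diag, prod.lift_snd,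
          Functor.map_id, Category.comp_id, w]
        refine (prod.lift_snd_assoc (a : T ⟶ X) (b : T ⟶ X) (η.app X)).trans ?_
        simp
    -- lift through the pullback square
    set l : T ⟶ X := key.lift (prod.lift a b) (a ≫ η.app X) hstar with hl
    have h₁ : l ≫ diag X = prod.lift a b := key.lift_fst (prod.lift a b) (a ≫ η.app X) hstar
    have ha : l ≫ diag X ≫ prod.fst = prod.lift a b ≫ prod.fst := by
      rw [← Category.assoc, h₁]; rfl
    have hb : l ≫ diag X ≫ prod.snd = prod.lift a b ≫ prod.snd := by
      rw [← Category.assoc, h₁]; rfl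
    simp only [diag, prod.lift_fst, prod.lift_snd, Category.comp_id] at ha hb
    rw [← ha, ← hb]
  exact hsub (L.obj X) X (η.app X) hmono
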